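/- The group (⊕_{i ∈ ℕ} (ℤ/2ℤ × ℤ/3ℤ)) × ℤ × ℤ is not linear over any field: for every field K and every natural number n there is no injective group homomorphism from (⊕_{i ∈ ℕ} (ℤ/2ℤ × ℤ/3ℤ)) × ℤ² into GL_n(K). -/

import Mathlib

open Module Module.End Function Polynomial Finset

lemma aux_unip {K V : Type*} [Field K] [AddCommGroup V] [Module K V]
    {q : ℕ} (hq : (q : K) ≠ 0) :
    ∀ (k : ℕ) (N : Module.End K V), N ^ k = 0 → (1 + N) ^ q = 1 → N = 0 := by
  intro k
  induction k with
  | zero =>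
    intro N h0 _
    have h1 : (1 : Module.End K V) = 0 := by simpa using h0
    calc N = N * 1 := (mul_one N).symm
    _ = N * 0 := by rw [h1]
    _ = 0 := mul_zero N
  | succ k ih =>
    intro N hk hu
    rcases Nat.eq_zero_or_pos k with rfl | hkpos
    · simpa using hk
    have hE : (1 + N) ^ q = ∑ m ∈ Finset.range (q + 1), N ^ m * (q.choose m : Module.End K V) := by
      rw [add_comm, (Commute.one_right N).add_pow]
      simp [mul_one]
    rw [hu] at hE
    have hE2 : ∑ m ∈ Finset.range q, N ^ (m + 1) * (q.choose (m + 1) : Module.End K V) = 0 := by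
      have := hE.symm
      rw [Finset.sum_range_succ'] at this
      simpa using this
    have hE3 : N ^ (k - 1) * (∑ m ∈ Finset.range q, N ^ (m + 1) * (q.choose (m + 1) : Module.End K V)) = 0 := by
      rw [hE2, mul_zero]
    rw [Finset.mul_sum] at hE3
    have hterm : ∀ m ∈ Finset.range q, N ^ (k - 1) * (N ^ (m + 1) * (q.choose (m + 1) : Module.End K V))
        = if m = 0 then N ^ k * (q : Module.End K V) else 0 := by
      intro m _
      rcases Nat.eq_zero_or_pos m with rfl | hm
      · simp only [if_pos rfl]
        rw [← mul_assoc, ← pow_add]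
        congr 2
        · omega
        · norm_num
      · rw [if_neg hm.ne', ← mul_assoc, ← pow_add]
        have hz : N ^ (k - 1 + (m + 1)) = 0 :=
          pow_eq_zero_of_le (by omega) hk
        rw [hz, zero_mul]
    rw [Finset.sum_congr rfl hterm, Finset.sum_ite_eq' (Finset.range q) 0] at hE3
    have hq0 : 0 < q := by
      rcases Nat.eq_zero_or_pos q with rfl | h
      · simp at hq
      · exact h
    rw [if_pos (Finset.mem_range.mpr hq0)] at hE3
    have hcast : (q : Module.End K V) = algebraMap K (Module.End K V) (q : K) := by
      simp
    rw [hcast] at hE3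
    have hk0 : N ^ k = 0 := by
      have h2 : (q : K) • (N ^ k) = 0 := by
        rw [← hE3, ← Algebra.commutes ((q:K)) (N ^ k), ← Algebra.smul_def]
      rcases smul_eq_zero.mp h2 with h | h
      · exact absurd h hq
      · exact h
    exact ih N hk0 hu

section Core

variable {K : Type*} [Field K] [IsAlgClosed K]

lemma aux_core {q n : ℕ} (hq : q.Prime) (hqK : (q : K) ≠ 0)
    (f : Multiplicative (Fin (n + 1) → ZMod q) →* GL (Fin n) K) :
    ¬ Function.Injective f := by
  intro hinj
  haveI : NeZero q := ⟨hq.pos.ne'⟩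
  classical
  set A := Multiplicative (Fin (n + 1) → ZMod q) with hA
  -- the endomorphism family
  let F : A →* Module.End K (Fin n → K) :=
    ((Matrix.toLinAlgEquiv' : Matrix (Fin n) (Fin n) K ≃ₐ[K] _).toAlgHom.toRingHom.toMonoidHom).comp
      ((Units.coeHom (Matrix (Fin n) (Fin n) K)).comp f)
  have hFinj : Function.Injective F := by
    intro a b hab
    apply hinj
    apply Units.ext
    exact (Matrix.toLinAlgEquiv' (R := K) (n := Fin n)).injective hab
  have hq1 : ∀ a : A, a ^ q = 1 := by
    intro a
    show Multiplicative.ofAdd (q • a.toAdd) = 1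
    have : q • a.toAdd = 0 := by
      funext i
      simp [ZMod.natCast_self]
    rw [this]
    rfl
  have hFpow : ∀ a : A, (F a) ^ q = 1 := by
    intro a; rw [← map_pow, hq1, map_one]
  have hcomm : ∀ a b : A, Commute (F a) (F b) := by
    intro a b
    show F a * F b = F b * F a
    rw [← map_mul, ← map_mul, mul_comm]
  -- simultaneous generalized eigenspaces
  set d := Module.finrank K (Fin n → K) with hd
  set W : (A → K) → Submodule K (Fin n → K) := fun χ => ⨅ a : A, (F a).maxGenEigenspace (χ a) with hW
  have htop : ⨆ χ : A → K, W χ = ⊤ := by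
    apply Module.End.iSup_iInf_maxGenEigenspace_eq_top_of_iSup_maxGenEigenspace_eq_top_of_commute
      (fun a : A => F a) (fun a b _ => hcomm a b)
    intro a
    exact Module.End.iSup_maxGenEigenspace_eq_top (F a)
  have hind : iSupIndep W :=
    Module.End.independent_iInf_maxGenEigenspace_of_forall_mapsTo (fun a : A => F a)
      (fun i j φ => Module.End.mapsTo_maxGenEigenspace_of_comm (hcomm j i) φ)
  haveI : Fintype {χ : A → K // W χ ≠ ⊥} := hind.fintypeNeBotOfFiniteDimensional
  have hcardS : Fintype.card {χ : A → K // W χ ≠ ⊥} ≤ d := hind.subtype_ne_bot_le_finrank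
  -- eigenvalues are q-th roots of unity
  have hroot : ∀ (χ : A → K), W χ ≠ ⊥ → ∀ a : A, (χ a) ^ q = 1 := by
    intro χ hχ a
    have h1 : (F a).maxGenEigenspace (χ a) ≠ ⊥ := by
      intro h
      exact hχ (le_bot_iff.mp (le_trans (iInf_le _ a) (le_of_eq h)))
    have hev : (F a).HasEigenvalue (χ a) :=
      (Module.End.hasUnifEigenvalue_iff_hasUnifEigenvalue_one (by simp)).mp h1
    obtain ⟨v, hv⟩ := hev.exists_hasEigenvector
    have hv2 : ((F a) ^ q) v = (χ a) ^ q • v := hv.pow_apply q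
    rw [hFpow a] at hv2
    have hv3 : ((χ a) ^ q - 1) • v = 0 := by
      rw [sub_smul, one_smul, ← hv2, Module.End.one_apply, sub_self]
    rcases smul_eq_zero.mp hv3 with h | h
    · exact sub_eq_zero.mp h
    · exact absurd h hv.2
  -- the separating map
  set R := Polynomial.nthRootsFinset q (1 : K) with hR
  set Phi : A → ({χ : A → K // W χ ≠ ⊥} → {x : K // x ∈ R}) :=
    fun a => fun χ => ⟨χ.1 a, (Polynomial.mem_nthRootsFinset hq.pos 1).mpr (hroot χ.1 χ.2 a)⟩
    with hPhi
  have hPhiInj : Function.Injective Phi := by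
    intro a b hab
    have hval : ∀ (χ : A → K), W χ ≠ ⊥ → χ a = χ b := by
      intro χ hχ
      exact congrArg Subtype.val (congrFun hab ⟨χ, hχ⟩)
    set T := F a - F b with hT
    -- T is nilpotent
    have hker : ∀ χ : A → K, W χ ≤ LinearMap.ker (T ^ (d + d)) := by
      intro χ
      by_cases hχ : W χ = ⊥
      · rw [hχ]; exact bot_le
      · set μ := χ a with hμ
        have hμb : χ b = μ := (hval χ hχ).symm
        intro x hx
        have hxa : x ∈ (F a).maxGenEigenspace μ := (iInf_le (fun c : A => (F c).maxGenEigenspace (χ c)) a) hx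
        have hxb : x ∈ (F b).maxGenEigenspace μ := by
          rw [← hμb]
          exact (iInf_le (fun c : A => (F c).maxGenEigenspace (χ c)) b) hx
        obtain ⟨X, hX⟩ : ∃ X : Module.End K (Fin n → K), X = F a - μ • (1 : Module.End K (Fin n → K)) := ⟨_, rfl⟩
        obtain ⟨Y, hY⟩ : ∃ Y : Module.End K (Fin n → K), Y = F b - μ • (1 : Module.End K (Fin n → K)) := ⟨_, rfl⟩
        -- the maximal generalized eigenspaces are kernels of d-th powers
        have hXker : ∀ y ∈ (F a).maxGenEigenspace μ, (X ^ d) y = 0 := by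
          intro y hy
          rw [Module.End.maxGenEigenspace_eq_genEigenspace_finrank, Module.End.genEigenspace_nat] at hy
          rw [hX]
          exact hy
        have hYker : (Y ^ d) x = 0 := by
          rw [Module.End.maxGenEigenspace_eq_genEigenspace_finrank, Module.End.genEigenspace_nat] at hxb
          rw [hY]
          exact hxb
        -- Y maps the maximal generalized eigenspace of F a into itself
        have hYmaps : ∀ y ∈ (F a).maxGenEigenspace μ, Y y ∈ (F a).maxGenEigenspace μ := by
          intro y hy
          have h1 : (F b) y ∈ (F a).maxGenEigenspace μ :=
            Module.End.mapsTo_maxGenEigenspace_of_comm (hcomm a b) μ hy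
          have h2 : (μ • (1 : Module.End K (Fin n → K))) y ∈ (F a).maxGenEigenspace μ := by
            rw [LinearMap.smul_apply, Module.End.one_apply]
            exact Submodule.smul_mem _ μ hy
          have h3 : Y y = (F b) y - (μ • (1 : Module.End K (Fin n → K))) y := by
            rw [hY]; rfl
          rw [h3]
          exact Submodule.sub_mem _ h1 h2
        have hYjmaps : ∀ (j : ℕ), (Y ^ j) x ∈ (F a).maxGenEigenspace μ := by
          intro j
          induction j with
          | zero => simpa using hxa
          | succ j ihj =>
            rw [pow_succ', Module.End.mul_apply]
            exact hYmaps _ ihj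
        have hcXY : Commute X Y := by
          have h1 : Commute (F a) (F b) := hcomm a b
          have h2 : Commute (F a) (μ • (1 : Module.End K (Fin n → K))) := (Commute.one_right (F a)).smul_right μ
          have h3 : Commute (μ • (1 : Module.End K (Fin n → K))) (F b) := (Commute.one_left (F b)).smul_left μ
          have h4 : Commute (μ • (1 : Module.End K (Fin n → K))) (μ • (1 : Module.End K (Fin n → K))) := Commute.refl _
          rw [hX, hY]
          exact (h1.sub_right h2).sub_left (h3.sub_right h4)
        have hTXY : T = X - Y := by
          rw [hT, hX, hY, sub_sub_sub_cancel_right]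
        -- expand (X - Y)^(d+d)
        rw [LinearMap.mem_ker, hTXY]
        have hexp : (X - Y) ^ (d + d) = ∑ m ∈ Finset.range (d + d + 1),
            X ^ m * (-Y) ^ (d + d - m) * ((d + d).choose m : Module.End K (Fin n → K)) := by
          rw [sub_eq_add_neg, (hcXY.neg_right).add_pow]
        rw [hexp, LinearMap.sum_apply]
        apply Finset.sum_eq_zero
        intro m hm
        rw [Finset.mem_range] at hm
        have hYj0 : ∀ j : ℕ, d ≤ j → (Y ^ j) x = 0 := by
          intro j hj
          have h6 : Y ^ j = Y ^ (j - d) * Y ^ d := by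
            rw [← pow_add]
            congr 1
            omega
          rw [h6, Module.End.mul_apply, hYker, map_zero]
        have hnY : ∀ j : ℕ, ((-Y) ^ j) x = (Y ^ j) x ∨ ((-Y) ^ j) x = -((Y ^ j) x) := by
          intro j
          rcases Nat.even_or_odd j with h | h
          · left
            exact congrArg (fun g : Module.End K (Fin n → K) => g x) (h.neg_pow Y)
          · right
            have h2 := congrArg (fun g : Module.End K (Fin n → K) => g x) (h.neg_pow Y)
            simpa using h2
        have hmain : (X ^ m * (-Y) ^ (d + d - m)) x = 0 := by
          rw [Module.End.mul_apply]
          by_cases hmd : d ≤ m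
          · -- X^d kills everything in the eigenspace
            have h5 : ((-Y) ^ (d + d - m)) x ∈ (F a).maxGenEigenspace μ := by
              rcases hnY (d + d - m) with h | h
              · rw [h]; exact hYjmaps _
              · rw [h]; exact Submodule.neg_mem _ (hYjmaps _)
            have h6 : X ^ m = X ^ (m - d) * X ^ d := by
              rw [← pow_add]
              congr 1
              omega
            rw [h6, Module.End.mul_apply, hXker _ h5, map_zero]
          · have h8 : ((-Y) ^ (d + d - m)) x = 0 := by
              rcases hnY (d + d - m) with h | h
              · rw [h, hYj0 _ (by omega)]
              · rw [h, hYj0 _ (by omega), neg_zero]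
            rw [h8, map_zero]
        calc (X ^ m * (-Y) ^ (d + d - m) * ((d + d).choose m : Module.End K (Fin n → K))) x
            = (X ^ m * (-Y) ^ (d + d - m)) (((d + d).choose m : Module.End K (Fin n → K)) x) := by
              rw [Module.End.mul_apply]
          _ = (X ^ m * (-Y) ^ (d + d - m)) (((d + d).choose m : ℕ) • x) := by
              norm_num
          _ = ((d + d).choose m : ℕ) • ((X ^ m * (-Y) ^ (d + d - m)) x) := by
              rw [map_nsmul]
          _ = 0 := by rw [hmain, smul_zero]
    have hTnil : T ^ (d + d) = 0 := by
      have : LinearMap.ker (T ^ (d + d)) = ⊤ := by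
        rw [eq_top_iff, ← htop]
        exact iSup_le hker
      exact LinearMap.ker_eq_top.mp this
    -- now use the unipotent lemma
    set u := F (a * b⁻¹) with hu
    set N := u - 1 with hN
    have hNT : N = T * F b⁻¹ := by
      rw [hN, hT, sub_mul, ← map_mul, ← map_mul, mul_inv_cancel, map_one]
    have hNnil : N ^ (d + d) = 0 := by
      have hc : Commute T (F b⁻¹) := (hcomm a b⁻¹).sub_left (hcomm b b⁻¹)
      rw [hNT, hc.mul_pow, hTnil, zero_mul]
    have hu1 : (1 + N) ^ q = 1 := by
      have h9 : (1 : Module.End K (Fin n → K)) + N = u := by rw [hN]; abel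
      rw [h9, hu, ← map_pow, hq1, map_one]
    have hN0 : N = 0 := aux_unip hqK (d + d) N hNnil hu1
    have hab1 : a * b⁻¹ = 1 := by
      apply hFinj
      rw [map_one, ← hu]
      have h10 : u = 1 + N := by rw [hN]; abel
      rw [h10, hN0, add_zero]
    exact mul_inv_eq_one.mp hab1
  -- counting
  haveI : Fintype {x : K // x ∈ R} := FinsetCoe.fintype R
  have hcard1 : Fintype.card A ≤
      Fintype.card ({χ : A → K // W χ ≠ ⊥} → {x : K // x ∈ R}) :=
    Fintype.card_le_of_injective Phi hPhiInj
  have hcardA : Fintype.card A = q ^ (n + 1) := by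
    have h11 : Fintype.card A = Fintype.card (Fin (n + 1) → ZMod q) :=
      Fintype.card_congr Multiplicative.toAdd
    rw [h11]
    simp [ZMod.card]
  have hcardR : Fintype.card {x : K // x ∈ R} ≤ q := by
    rw [Fintype.card_coe]
    calc R.card ≤ Multiset.card (Polynomial.nthRoots q (1 : K)) := by
          rw [hR, Polynomial.nthRootsFinset_def]
          exact Multiset.toFinset_card_le _
      _ ≤ q := Polynomial.card_nthRoots q 1
  have hcardFun : Fintype.card ({χ : A → K // W χ ≠ ⊥} → {x : K // x ∈ R})
      = Fintype.card {x : K // x ∈ R} ^ Fintype.card {χ : A → K // W χ ≠ ⊥} :=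
    Fintype.card_fun
  have hdn : d = n := by
    rw [hd, Module.finrank_pi, Fintype.card_fin]
  have hle : Fintype.card {x : K // x ∈ R} ^ Fintype.card {χ : A → K // W χ ≠ ⊥} ≤ q ^ n := by
    calc Fintype.card {x : K // x ∈ R} ^ Fintype.card {χ : A → K // W χ ≠ ⊥}
        ≤ q ^ Fintype.card {χ : A → K // W χ ≠ ⊥} := Nat.pow_le_pow_left hcardR _
      _ ≤ q ^ n := Nat.pow_le_pow_right hq.one_lt.le (le_trans hcardS (le_of_eq hdn))
  rw [hcardA, hcardFun] at hcard1
  have : q ^ (n + 1) ≤ q ^ n := le_trans hcard1 hle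
  have : q ^ n < q ^ (n + 1) := Nat.pow_lt_pow_right hq.one_lt (Nat.lt_succ_self n)
  omega

end Core

lemma aux_embed {q : ℕ} (e : ZMod q →+ ZMod 2 × ZMod 3) (he : Function.Injective e) (m : ℕ) :
    ∃ g : Multiplicative (Fin m → ZMod q) →*
        Multiplicative ((Π₀ _ : ℕ, ZMod 2 × ZMod 3) × ℤ × ℤ),
      Function.Injective g := by
  classical
  set D : (Fin m → ZMod q) →+ (Π₀ _ : ℕ, ZMod 2 × ZMod 3) :=
    ∑ i : Fin m, (DFinsupp.singleAddHom (fun _ : ℕ => ZMod 2 × ZMod 3) (i : ℕ)).comp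
      (e.comp (Pi.evalAddMonoidHom (fun _ : Fin m => ZMod q) i)) with hD
  have hsingle : ∀ (i j : Fin m) (b : ZMod 2 × ZMod 3),
      (DFinsupp.single (β := fun _ : ℕ => ZMod 2 × ZMod 3) (i : ℕ) b) ((j : ℕ)) = if i = j then b else 0 := by
    intro i j b
    by_cases h : i = j
    · subst h
      rw [if_pos rfl, DFinsupp.single_eq_same]
    · rw [if_neg h, DFinsupp.single_eq_of_ne (fun hc => h (Fin.val_injective hc).symm)]
  have heval : ∀ (x : Fin m → ZMod q) (j : Fin m), (D x) ((j : ℕ)) = e (x j) := by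
    intro x j
    rw [hD, AddMonoidHom.finset_sum_apply, DFinsupp.finset_sum_apply]
    have h1 : ∀ (i : Fin m), i ∈ (Finset.univ : Finset (Fin m)) → ((DFinsupp.singleAddHom (fun _ : ℕ => ZMod 2 × ZMod 3) (i : ℕ)).comp
        (e.comp (Pi.evalAddMonoidHom (fun _ : Fin m => ZMod q) i)) x) ((j : ℕ))
        = if i = j then e (x i) else 0 := by
      intro i _
      exact hsingle i j (e (x i))
    rw [Finset.sum_congr rfl h1, Finset.sum_ite_eq' Finset.univ j, if_pos (Finset.mem_univ j)]
  have hDinj : Function.Injective D := by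
    intro x y hxy
    funext j
    apply he
    rw [← heval x j, ← heval y j, hxy]
  set ψ : (Fin m → ZMod q) →+ (Π₀ _ : ℕ, ZMod 2 × ZMod 3) × ℤ × ℤ :=
    (AddMonoidHom.inl (Π₀ _ : ℕ, ZMod 2 × ZMod 3) (ℤ × ℤ)).comp D with hψ
  have hψinj : Function.Injective ψ := by
    intro x y hxy
    apply hDinj
    exact congrArg Prod.fst hxy
  refine ⟨AddMonoidHom.toMultiplicative ψ, ?_⟩
  intro a b hab
  have h2 : ψ a.toAdd = ψ b.toAdd := hab
  exact hψinj h2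

/-- The group `(⊕_{i ∈ ℕ} (ℤ/2ℤ × ℤ/3ℤ)) × ℤ × ℤ` is not linear over any field:
for every field `K` and every `n`, there is no injective group homomorphism from
it into `GL n K`. -/
theorem stmt_10 (K : Type) [Field K] (n : ℕ) :
    ¬ ∃ f : Multiplicative ((Π₀ _ : ℕ, ZMod 2 × ZMod 3) × ℤ × ℤ) →* GL (Fin n) K,
      Function.Injective f := by
  rintro ⟨f, hf⟩
  classical
  set L := AlgebraicClosure K with hL
  -- injective map from GL n K to GL n L
  set G : GL (Fin n) K →* GL (Fin n) L := Matrix.GeneralLinearGroup.map (algebraMap K L) with hG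
  have hGinj : Function.Injective G := by
    intro a b hab
    apply Units.ext
    have h1 : (a : Matrix (Fin n) (Fin n) K).map (algebraMap K L)
        = (b : Matrix (Fin n) (Fin n) K).map (algebraMap K L) := congrArg Units.val hab
    exact Matrix.map_injective (algebraMap K L).injective h1
  -- characteristic cannot be both 2 and 3
  have h23 : ((2 : ℕ) : L) ≠ 0 ∨ ((3 : ℕ) : L) ≠ 0 := by
    by_contra hcon
    push_neg at hcon
    obtain ⟨h2, h3⟩ := hcon
    push_cast at h2 h3
    have h4 : (3 : L) - (2 : L) = 1 := by norm_num
    rw [h2, h3] at h4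
    simp at h4
  rcases h23 with hq | hq
  · -- q = 2
    have he : Function.Injective (AddMonoidHom.inl (ZMod 2) (ZMod 3)) := by
      intro a b hab
      exact congrArg Prod.fst hab
    obtain ⟨g, hg⟩ := aux_embed (AddMonoidHom.inl (ZMod 2) (ZMod 3)) he (n + 1)
    exact aux_core Nat.prime_two hq (G.comp (f.comp g)) (hGinj.comp (hf.comp hg))
  · -- q = 3
    have he : Function.Injective (AddMonoidHom.inr (ZMod 2) (ZMod 3)) := by
      intro a b hab
      exact congrArg Prod.snd hab
    obtain ⟨g, hg⟩ := aux_embed (AddMonoidHom.inr (ZMod 2) (ZMod 3)) he (n + 1)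
    exact aux_core Nat.prime_three hq (G.comp (f.comp g)) (hGinj.comp (hf.comp hg))
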